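/- For R ≥ 2, y ∈ [0,R], a > 0 and t > 0, the periodic reflected Green's function G̃_R(y,ξ,at) = Σ_{n∈ℤ} [Φ(y−ξ−2nR,at) − Φ(y+ξ−2nR,at)] satisfies ∫₀^R |G̃_R(y,ξ,at)| dξ ≤ 2 and ∫₀^R |∂_y G̃_R(y,ξ,at)| dξ ≤ 2√2/√(at). -/

import Mathlib

open MeasureTheory Real Set

/-- The 1D heat kernel `Φ(z,s) = (4πs)^{-1/2} exp(−z²/(4s))`. -/
noncomputable def Phi (z s : ℝ) : ℝ := (1 / Real.sqrt (4 * π * s)) * Real.exp (-z ^ 2 / (4 * s))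

/-- The reflected Green's function on `[0,R]` obtained by the method of images. -/
noncomputable def GtildeR (R y ξ s : ℝ) : ℝ :=
  ∑' n : ℤ, (Phi (y - ξ - 2 * n * R) s - Phi (y + ξ - 2 * n * R) s)

open Filter Topology

lemma phi_nonneg (z s : ℝ) : 0 ≤ Phi z s := by
  unfold Phi; positivity

lemma phi_neg (z s : ℝ) : Phi (-z) s = Phi z s := by
  unfold Phi; rw [neg_pow]; ring_nf

lemma phi_eq (z s : ℝ) : Phi z s =
    (1 / Real.sqrt (4 * π * s)) * Real.exp (-(4 * s)⁻¹ * z ^ 2) := by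
  have h : -z ^ 2 / (4 * s) = -(4 * s)⁻¹ * z ^ 2 := by ring
  rw [Phi, h]

lemma continuous_phi (s : ℝ) : Continuous (fun z => Phi z s) := by
  unfold Phi
  exact continuous_const.mul (Real.continuous_exp.comp ((continuous_pow 2).neg.div_const _))

lemma integrable_phi {s : ℝ} (hs : 0 < s) : Integrable (fun z => Phi z s) := by
  have hb : (0:ℝ) < (4 * s)⁻¹ := by positivity
  have h := (integrable_exp_neg_mul_sq hb).const_mul (1 / Real.sqrt (4 * π * s))
  refine h.congr ?_
  filter_upwards with z
  rw [phi_eq]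

lemma integral_phi {s : ℝ} (hs : 0 < s) : ∫ z : ℝ, Phi z s = 1 := by
  simp only [phi_eq]
  rw [integral_const_mul, integral_gaussian]
  have h : π / (4 * s)⁻¹ = 4 * π * s := by field_simp
  rw [h, one_div, inv_mul_cancel₀]
  positivity

noncomputable def psi (s z : ℝ) : ℝ := |z| / (2 * s) * Phi z s

lemma psi_nonneg {s : ℝ} (hs : 0 < s) (z : ℝ) : 0 ≤ psi s z := by
  have := phi_nonneg z s
  unfold psi; positivity

lemma psi_neg (s z : ℝ) : psi s (-z) = psi s z := by
  unfold psi; rw [abs_neg, phi_neg]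

lemma psi_eq (s z : ℝ) : psi s z =
    (1 / Real.sqrt (4 * π * s)) / (2 * s) * (|z| * Real.exp (-(4 * s)⁻¹ * z ^ 2)) := by
  rw [psi, phi_eq]; ring

lemma continuous_psi (s : ℝ) : Continuous (psi s) :=
  (continuous_abs.div_const _).mul (continuous_phi s)

lemma integrable_psi {s : ℝ} (hs : 0 < s) : Integrable (psi s) := by
  have hb : (0:ℝ) < (4 * s)⁻¹ := by positivity
  have h := ((integrable_mul_exp_neg_mul_sq hb).abs.const_mul
    ((1 / Real.sqrt (4 * π * s)) / (2 * s)))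
  refine h.congr ?_
  filter_upwards with z
  rw [psi_eq, abs_mul, abs_of_nonneg (Real.exp_pos _).le]

lemma integral_Ioi_mul_exp {b : ℝ} (hb : 0 < b) :
    ∫ x in Ioi (0:ℝ), x * Real.exp (-b * x ^ 2) = (2 * b)⁻¹ := by
  have A : ∀ x : ℝ, HasDerivAt (fun x : ℝ => -(2 * b)⁻¹ * Real.exp (-b * x ^ 2))
      (x * Real.exp (-b * x ^ 2)) x := by
    intro x
    have h1 : HasDerivAt (fun x : ℝ => -b * x ^ 2) (-b * (2 * x)) x := by
      simpa using (hasDerivAt_pow 2 x).const_mul (-b)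
    have h2 := (h1.exp).const_mul (-(2 * b)⁻¹)
    refine h2.congr_deriv ?_
    have hb0 : b ≠ 0 := hb.ne'
    field_simp
  have B : Tendsto (fun y : ℝ => -(2 * b)⁻¹ * Real.exp (-b * y ^ 2)) atTop
      (𝓝 (-(2 * b)⁻¹ * 0)) := by
    refine Tendsto.const_mul _ ?_
    exact Real.tendsto_exp_atBot.comp
      ((tendsto_pow_atTop two_ne_zero).const_mul_atTop_of_neg (neg_lt_zero.2 hb))
  have h := integral_Ioi_of_hasDerivAt_of_tendsto' (a := 0) (fun x _ => A x)
    (integrable_mul_exp_neg_mul_sq hb).integrableOn B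
  rw [h]
  norm_num

lemma integral_abs_mul_exp {b : ℝ} (hb : 0 < b) :
    ∫ x : ℝ, |x| * Real.exp (-b * x ^ 2) = b⁻¹ := by
  have hint : Integrable (fun x : ℝ => |x| * Real.exp (-b * x ^ 2)) := by
    have h := (integrable_mul_exp_neg_mul_sq hb).abs
    refine h.congr ?_
    filter_upwards with z
    rw [abs_mul, abs_of_nonneg (Real.exp_pos _).le]
  have hIoi : ∫ x in Ioi (0:ℝ), |x| * Real.exp (-b * x ^ 2) = (2*b)⁻¹ := by
    rw [← integral_Ioi_mul_exp hb]
    refine setIntegral_congr_fun measurableSet_Ioi ?_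
    intro x hx
    dsimp only
    rw [abs_of_nonneg (le_of_lt (mem_Ioi.mp hx))]
  have hIic : ∫ x in Iic (0:ℝ), |x| * Real.exp (-b * x ^ 2) = (2*b)⁻¹ := by
    have h0 := integral_comp_neg_Ioi (0:ℝ) (fun x => |x| * Real.exp (-b * x ^ 2))
    simp only [abs_neg, neg_zero, even_two.neg_pow] at h0
    rw [← h0, hIoi]
  rw [← intervalIntegral.integral_Iic_add_Ioi hint.integrableOn hint.integrableOn, hIic, hIoi]
  rw [mul_inv]
  ring_nf

lemma integral_psi {s : ℝ} (hs : 0 < s) :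
    ∫ z : ℝ, psi s z = 2 / Real.sqrt (4 * π * s) := by
  have hb : (0:ℝ) < (4 * s)⁻¹ := by positivity
  simp only [psi_eq]
  rw [integral_const_mul, integral_abs_mul_exp hb, inv_inv]
  field_simp
  ring
noncomputable def uZ (β : ℝ) (n : ℤ) : ℝ :=
  ((n.natAbs : ℝ) + 2) * Real.exp (-β * ((n.natAbs : ℝ) - 2) ^ 2)

lemma uZ_nonneg (β : ℝ) (n : ℤ) : 0 ≤ uZ β n := by
  unfold uZ; positivity

lemma summable_uZ {β : ℝ} (hβ : 0 < β) : Summable (uZ β) := by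
  have hnat : Summable (fun k : ℕ => ((k : ℝ) + 2) * Real.exp (-β * ((k : ℝ) - 2) ^ 2)) := by
    set r := Real.exp (-β) with hr
    have hr0 : (0:ℝ) ≤ r := (Real.exp_pos _).le
    have hr1 : r < 1 := by
      rw [hr, Real.exp_lt_one_iff]
      linarith
    have h1 : Summable (fun k : ℕ => (k : ℝ) ^ (1:ℕ) * r ^ k) :=
      summable_pow_mul_geometric_of_norm_lt_one 1 (by rwa [Real.norm_eq_abs, abs_of_nonneg hr0])
    have h2 : Summable (fun k : ℕ => (((k : ℝ) + 2) * r ^ k) * Real.exp (4*β)) := by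
      refine Summable.mul_right _ ?_
      have := h1.add ((summable_geometric_of_lt_one hr0 hr1).mul_left 2)
      refine this.congr ?_
      intro k
      simp [pow_one]
      ring
    refine Summable.of_nonneg_of_le (fun k => by positivity) (fun k => ?_) h2
    have hk : Real.exp (-β * ((k : ℝ) - 2) ^ 2) ≤ r ^ k * Real.exp (4*β) := by
      rw [hr, ← Real.exp_nat_mul, ← Real.exp_add, Real.exp_le_exp]
      nlinarith [sq_nonneg ((k:ℝ) - 5/2), hβ.le, sq_nonneg ((k:ℝ)-2),
        mul_nonneg hβ.le (sq_nonneg ((k:ℝ) - 5/2))]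
    calc ((k : ℝ) + 2) * Real.exp (-β * ((k : ℝ) - 2) ^ 2)
        ≤ ((k : ℝ) + 2) * (r ^ k * Real.exp (4*β)) := by
          refine mul_le_mul_of_nonneg_left hk (by positivity)
      _ = (((k : ℝ) + 2) * r ^ k) * Real.exp (4*β) := by ring
  refine Summable.of_nat_of_neg ?_ ?_
  · refine hnat.congr ?_
    intro k
    simp [uZ]
  · refine hnat.congr ?_
    intro k
    simp [uZ]

noncomputable def Kc (s w : ℝ) : ℝ :=
  (1 + w / (2 * s)) * (1 / Real.sqrt (4 * π * s)) * Real.exp (4 * (w ^ 2 / (4 * s)))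

lemma Kc_nonneg (s w : ℝ) (hs : 0 < s) (hw : 0 < w) : 0 ≤ Kc s w := by
  unfold Kc; positivity

lemma master_bound {s w x : ℝ} (hs : 0 < s) (hw : 0 < w) (hx : |x| ≤ 2 * w) (n : ℤ) :
    (1 + |x - n * w| / (2 * s)) * Phi (x - n * w) s
      ≤ Kc s w * uZ (w ^ 2 / (4 * s)) n := by
  set β := w ^ 2 / (4 * s) with hβ
  have hβpos : (0:ℝ) < w ^ 2 / (4 * s) := by positivity
  rw [← hβ] at hβpos
  set N := ((n.natAbs : ℝ)) with hNdef
  have hN0 : (0:ℝ) ≤ N := by positivity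
  have habs : |(n : ℝ)| = N := by
    rw [hNdef, Nat.cast_natAbs, Int.cast_abs]
  have h1 : |x - n * w| ≤ (N + 2) * w := by
    calc |x - n * w| ≤ |x| + |(n:ℝ) * w| := abs_sub _ _
      _ = |x| + N * w := by rw [abs_mul, habs, abs_of_pos hw]
      _ ≤ 2 * w + N * w := by linarith
      _ = (N + 2) * w := by ring
  have hexp : Real.exp (-(x - n * w) ^ 2 / (4 * s))
      ≤ Real.exp (4 * β) * Real.exp (-β * (N - 2) ^ 2) := by
    rw [← Real.exp_add, Real.exp_le_exp]
    have hz2 : (0:ℝ) ≤ (x - n * w) ^ 2 / (4 * s) := by positivity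
    rcases le_or_gt N 2 with h | h
    · have hb1 : β * (N - 2) ^ 2 ≤ 4 * β := by
        nlinarith [mul_nonneg hN0 (by linarith : (0:ℝ) ≤ 4 - N), hβpos.le]
      have heq : -(x - n*w) ^ 2 / (4*s) = -((x - n*w) ^ 2 / (4*s)) := by ring
      rw [heq]
      linarith
    · have hzlb : (N - 2) * w ≤ |x - n * w| := by
        have h2 : |(n:ℝ) * w| - |x| ≤ |x - n * w| := by
          rw [abs_sub_comm]
          exact abs_sub_abs_le_abs_sub _ _
        rw [abs_mul, habs, abs_of_pos hw] at h2
        nlinarith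
      have hsq : ((N - 2) * w) ^ 2 ≤ (x - n * w) ^ 2 := by
        rw [← sq_abs (x - n * w)]
        apply pow_le_pow_left₀ (by nlinarith) hzlb
      have hdiv : β * (N - 2) ^ 2 ≤ (x - n * w) ^ 2 / (4 * s) := by
        rw [hβ]
        rw [div_mul_eq_mul_div, div_le_div_iff₀ (by positivity) (by positivity)]
        nlinarith
      have heq : -(x - n*w) ^ 2 / (4*s) = -((x - n*w) ^ 2 / (4*s)) := by ring
      rw [heq]
      linarith
  have h3 : 1 + |x - n * w| / (2 * s) ≤ (1 + w / (2 * s)) * (N + 2) := by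
    have hd : |x - n * w| / (2 * s) ≤ (N + 2) * w / (2 * s) := by gcongr
    have hws : 0 ≤ w / (2 * s) := by positivity
    have : (N + 2) * w / (2 * s) = (w / (2 * s)) * (N + 2) := by ring
    nlinarith [mul_nonneg hws hN0]
  have habs0 : (0:ℝ) ≤ |x - n * w| / (2 * s) := by positivity
  calc (1 + |x - n * w| / (2 * s)) * Phi (x - n * w) s
      ≤ ((1 + w / (2 * s)) * (N + 2)) *
        ((1 / Real.sqrt (4 * π * s)) * (Real.exp (4 * β) * Real.exp (-β * (N - 2) ^ 2))) := by
        unfold Phi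
        refine mul_le_mul h3 (mul_le_mul_of_nonneg_left hexp (by positivity)) (by positivity) ?_
        positivity
    _ = Kc s w * uZ β n := by
        rw [Kc, uZ, ← hNdef, ← hβ]
        ring
lemma phi_le_master {s w x : ℝ} (hs : 0 < s) (hw : 0 < w) (hx : |x| ≤ 2 * w) (n : ℤ) :
    Phi (x - n * w) s ≤ Kc s w * uZ (w ^ 2 / (4 * s)) n := by
  refine le_trans ?_ (master_bound hs hw hx n)
  have h0 : (0:ℝ) ≤ |x - n * w| / (2 * s) := by positivity
  nlinarith [phi_nonneg (x - n * w) s]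

lemma psi_le_master {s w x : ℝ} (hs : 0 < s) (hw : 0 < w) (hx : |x| ≤ 2 * w) (n : ℤ) :
    psi s (x - n * w) ≤ Kc s w * uZ (w ^ 2 / (4 * s)) n := by
  refine le_trans ?_ (master_bound hs hw hx n)
  rw [psi]
  nlinarith [phi_nonneg (x - n * w) s]

lemma summable_phi_family {s w x : ℝ} (hs : 0 < s) (hw : 0 < w) (hx : |x| ≤ 2 * w) :
    Summable (fun n : ℤ => Phi (x - n * w) s) :=
  Summable.of_nonneg_of_le (fun n => phi_nonneg _ _) (fun n => phi_le_master hs hw hx n)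
    ((summable_uZ (by positivity)).mul_left _)

lemma summable_psi_family {s w x : ℝ} (hs : 0 < s) (hw : 0 < w) (hx : |x| ≤ 2 * w) :
    Summable (fun n : ℤ => psi s (x - n * w)) :=
  Summable.of_nonneg_of_le (fun n => psi_nonneg hs _) (fun n => psi_le_master hs hw hx n)
    ((summable_uZ (by positivity)).mul_left _)

lemma measurable_tsum_nonneg {f : ℤ → ℝ → ℝ} (hf : ∀ n, Measurable (f n))
    (h0 : ∀ n x, 0 ≤ f n x) : Measurable (fun x => ∑' n, f n x) := by
  have key : (fun x => ∑' n, f n x)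
      = fun x => (∑' n, ENNReal.ofReal (f n x)).toReal := by
    funext x
    by_cases hsum : Summable (fun n => f n x)
    · rw [← ENNReal.ofReal_tsum_of_nonneg (fun n => h0 n x) hsum,
        ENNReal.toReal_ofReal (tsum_nonneg (fun n => h0 n x))]
    · rw [tsum_eq_zero_of_not_summable hsum]
      have htop : ∑' n, ENNReal.ofReal (f n x) = ⊤ := by
        by_contra h
        apply hsum
        have hs2 := ENNReal.summable_toReal h
        refine hs2.congr ?_
        intro n
        rw [ENNReal.toReal_ofReal (h0 n x)]
      rw [htop]; simp
  rw [key]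
  exact ENNReal.measurable_toReal.comp
    (Measurable.ennreal_tsum fun n => ENNReal.measurable_ofReal.comp (hf n))

lemma aux_integrableOn {R : ℝ} {F : ℤ → ℝ → ℝ} {C : ℤ → ℝ}
    (hFm : ∀ n, Measurable (F n)) (hF0 : ∀ n ξ, 0 ≤ F n ξ) (hCs : Summable C)
    (hb : ∀ n : ℤ, ∀ ξ ∈ Ioc (0:ℝ) R, F n ξ ≤ C n) :
    IntegrableOn (fun ξ => ∑' n, F n ξ) (Ioc 0 R) := by
  have hM : ∀ ξ ∈ Ioc (0:ℝ) R, (∑' n, F n ξ) ≤ ∑' n, C n := fun ξ hξ =>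
    Summable.tsum_le_tsum (fun n => hb n ξ hξ)
      (Summable.of_nonneg_of_le (fun n => hF0 n ξ) (fun n => hb n ξ hξ) hCs) hCs
  refine Integrable.mono' (g := fun _ => ∑' n, C n)
    (integrableOn_const measure_Ioc_lt_top.ne)
    ((measurable_tsum_nonneg hFm hF0).aestronglyMeasurable) ?_
  rw [ae_restrict_iff' measurableSet_Ioc]
  filter_upwards with ξ hξ
  rw [Real.norm_eq_abs, abs_of_nonneg (tsum_nonneg (fun n => hF0 n ξ))]
  exact hM ξ hξ

lemma integral_shift (g : ℝ → ℝ) (c : ℝ) {R : ℝ} (hR : 0 ≤ R) :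
    ∫ ξ in Ioc (0:ℝ) R, g (c - ξ) = ∫ x in Ioc (c - R) c, g x := by
  rw [← intervalIntegral.integral_of_le hR, intervalIntegral.integral_comp_sub_left g c,
    sub_zero, ← intervalIntegral.integral_of_le (by linarith)]

lemma family_key {g : ℝ → ℝ} (hgi : Integrable g) (hg0 : ∀ x, 0 ≤ g x)
    {R : ℝ} (hR : 0 < R) (c : ℤ → ℝ) (hc : ∀ m n : ℤ, m ≠ n → 2 * R ≤ |c m - c n|) :
    Summable (fun n : ℤ => ∫ ξ in Ioc (0:ℝ) R, g (c n - ξ)) ∧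
    ∑' n : ℤ, ∫ ξ in Ioc (0:ℝ) R, g (c n - ξ) ≤ ∫ x, g x := by
  have hd : Pairwise (Function.onFun Disjoint fun n : ℤ => Ioc (c n - R) (c n)) := by
    intro m n hmn
    have h := hc m n hmn
    rw [Function.onFun, Set.Ioc_disjoint_Ioc]
    rcases le_total (c m) (c n) with hle | hle
    · rw [abs_of_nonpos (by linarith)] at h
      exact min_le_iff.mpr (Or.inl (le_max_iff.mpr (Or.inr (by linarith))))
    · rw [abs_of_nonneg (by linarith)] at h
      exact min_le_iff.mpr (Or.inr (le_max_iff.mpr (Or.inl (by linarith))))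
  have hs := hasSum_integral_iUnion (fun n : ℤ => measurableSet_Ioc) hd
    (hgi.integrableOn (s := ⋃ n : ℤ, Ioc (c n - R) (c n)))
  have hrw : (fun n : ℤ => ∫ ξ in Ioc (0:ℝ) R, g (c n - ξ))
      = fun n : ℤ => ∫ x in Ioc (c n - R) (c n), g x := by
    funext n
    exact integral_shift g (c n) hR.le
  constructor
  · rw [hrw]
    exact hs.summable
  · rw [hrw, hs.tsum_eq]
    exact setIntegral_le_integral hgi (Eventually.of_forall hg0)

lemma spacing {R : ℝ} (hR : 0 < R) (e ε : ℝ) (hε : |ε| = 2 * R) :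
    ∀ m n : ℤ, m ≠ n → 2 * R ≤ |(e + m * ε) - (e + n * ε)| := by
  intro m n hmn
  have h1 : (1:ℝ) ≤ |(m : ℝ) - n| := by
    have : (1:ℤ) ≤ |m - n| := Int.one_le_abs (sub_ne_zero.mpr hmn)
    calc (1:ℝ) = ((1:ℤ):ℝ) := by norm_num
      _ ≤ ((|m - n| : ℤ) : ℝ) := by exact_mod_cast this
      _ = |(m:ℝ) - n| := by push_cast [Int.cast_abs]; ring_nf
  have heq : (e + m * ε) - (e + n * ε) = ((m:ℝ) - n) * ε := by ring
  rw [heq, abs_mul, hε]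
  nlinarith [abs_nonneg ε, hR]
lemma hasDerivAt_phi {s : ℝ} (hs : 0 < s) (z : ℝ) :
    HasDerivAt (fun z => Phi z s) (-(z / (2 * s)) * Phi z s) z := by
  have h1 : HasDerivAt (fun z : ℝ => -z ^ 2 / (4 * s)) (-(2 * z) / (4 * s)) z := by
    have := ((hasDerivAt_pow 2 z).neg).div_const (4 * s)
    simpa using this
  have h2 := (h1.exp).const_mul (1 / Real.sqrt (4 * π * s))
  have hfun : (fun z => Phi z s) = fun z =>
      (1 / Real.sqrt (4 * π * s)) * Real.exp (-z ^ 2 / (4 * s)) := rfl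
  rw [hfun]
  refine h2.congr_deriv ?_
  unfold Phi
  field_simp
  ring

lemma hasDerivAt_term {s : ℝ} (hs : 0 < s) (d y₀ : ℝ) :
    HasDerivAt (fun y' => Phi (y' - d) s) (-((y₀ - d) / (2 * s)) * Phi (y₀ - d) s) y₀ := by
  have h := (hasDerivAt_phi hs (y₀ - d)).comp y₀ ((hasDerivAt_id y₀).sub_const d)
  simpa [Function.comp_def] using h

lemma two_div_sqrt_le {s : ℝ} (hs : 0 < s) :
    2 / Real.sqrt (4 * π * s) ≤ Real.sqrt 2 / Real.sqrt s := by
  have h4π : (0:ℝ) < 4 * π := by positivity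
  rw [show (4:ℝ) * π * s = (4 * π) * s by ring, Real.sqrt_mul h4π.le]
  rw [div_le_div_iff₀ (by positivity) (by positivity)]
  have hkey : (2:ℝ) ≤ Real.sqrt 2 * Real.sqrt (4 * π) := by
    rw [← Real.sqrt_mul (by norm_num)]
    have : (4:ℝ) ≤ 2 * (4 * π) := by nlinarith [Real.pi_gt_three]
    calc (2:ℝ) = Real.sqrt 4 := by
          rw [show (4:ℝ) = 2 ^ 2 by norm_num, Real.sqrt_sq (by norm_num)]
      _ ≤ Real.sqrt (2 * (4 * π)) := Real.sqrt_le_sqrt this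
  nlinarith [Real.sqrt_nonneg s, Real.sqrt_pos.mpr hs]
section MainParts

variable {R y s : ℝ}

lemma cont_sub (c d s : ℝ) : Continuous fun ξ : ℝ => Phi (c - ξ - d) s := by
  have h : Continuous fun ξ : ℝ => c - ξ - d :=
    (continuous_const.sub continuous_id).sub continuous_const
  exact (continuous_phi s).comp h

lemma cont_add (c d s : ℝ) : Continuous fun ξ : ℝ => Phi (c + ξ - d) s := by
  have h : Continuous fun ξ : ℝ => c + ξ - d :=
    (continuous_const.add continuous_id).sub continuous_const
  exact (continuous_phi s).comp h

lemma xbound1 (hR : 2 ≤ R) (hy0 : 0 ≤ y) (hyR : y ≤ R) {ξ : ℝ} (hξ : ξ ∈ Ioc (0:ℝ) R) :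
    |y - ξ| ≤ 2 * (2 * R) := by
  obtain ⟨h1, h2⟩ := hξ
  rw [abs_le]; constructor <;> linarith

lemma xbound2 (hR : 2 ≤ R) (hy0 : 0 ≤ y) (hyR : y ≤ R) {ξ : ℝ} (hξ : ξ ∈ Ioc (0:ℝ) R) :
    |y + ξ| ≤ 2 * (2 * R) := by
  obtain ⟨h1, h2⟩ := hξ
  rw [abs_le]; constructor <;> linarith

lemma sum_phi1 (hs : 0 < s) (hR : 2 ≤ R) (hy0 : 0 ≤ y) (hyR : y ≤ R)
    {ξ : ℝ} (hξ : ξ ∈ Ioc (0:ℝ) R) :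
    Summable (fun n : ℤ => Phi (y - ξ - 2 * n * R) s) := by
  refine (summable_phi_family hs (by linarith : (0:ℝ) < 2 * R)
    (xbound1 hR hy0 hyR hξ)).congr fun n => ?_
  congr 1; ring

lemma sum_phi2 (hs : 0 < s) (hR : 2 ≤ R) (hy0 : 0 ≤ y) (hyR : y ≤ R)
    {ξ : ℝ} (hξ : ξ ∈ Ioc (0:ℝ) R) :
    Summable (fun n : ℤ => Phi (y + ξ - 2 * n * R) s) := by
  refine (summable_phi_family hs (by linarith : (0:ℝ) < 2 * R)
    (xbound2 hR hy0 hyR hξ)).congr fun n => ?_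
  congr 1; ring

lemma part1 (hR : 2 ≤ R) (hy0 : 0 ≤ y) (hyR : y ≤ R) (hs : 0 < s) :
    (∫ ξ in Set.Ioc (0:ℝ) R, |GtildeR R y ξ s|) ≤ 2 := by
  have hR0 : (0:ℝ) < R := by linarith
  have hw : (0:ℝ) < 2 * R := by linarith
  have hβ : (0:ℝ) < (2*R) ^ 2 / (4 * s) := by positivity
  have hu : Summable (fun n : ℤ => Kc s (2*R) * uZ ((2*R)^2/(4*s)) n) :=
    (summable_uZ hβ).mul_left _
  -- pointwise bound on |G|
  have hGle : ∀ ξ ∈ Ioc (0:ℝ) R, |GtildeR R y ξ s| ≤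
      (∑' n : ℤ, Phi (y - ξ - 2 * n * R) s) + ∑' n : ℤ, Phi (y + ξ - 2 * n * R) s := by
    intro ξ hξ
    have hS1 := sum_phi1 hs hR hy0 hyR hξ
    have hS2 := sum_phi2 hs hR hy0 hyR hξ
    rw [GtildeR, Summable.tsum_sub hS1 hS2]
    refine (abs_sub _ _).trans ?_
    rw [abs_of_nonneg (tsum_nonneg fun n => phi_nonneg _ _),
      abs_of_nonneg (tsum_nonneg fun n => phi_nonneg _ _)]
  -- integrability of the two series
  have hmeas1 : ∀ n : ℤ, Measurable (fun ξ : ℝ => Phi (y - ξ - 2 * (n:ℝ) * R) s) := fun n =>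
    (cont_sub y (2 * (n:ℝ) * R) s).measurable
  have hmeas2 : ∀ n : ℤ, Measurable (fun ξ : ℝ => Phi (y + ξ - 2 * (n:ℝ) * R) s) := fun n =>
    (cont_add y (2 * (n:ℝ) * R) s).measurable
  have hb1 : ∀ n : ℤ, ∀ ξ ∈ Ioc (0:ℝ) R, Phi (y - ξ - 2 * n * R) s
      ≤ Kc s (2*R) * uZ ((2*R)^2/(4*s)) n := by
    intro n ξ hξ
    have h := phi_le_master hs hw (xbound1 hR hy0 hyR hξ) n
    rw [show (y - ξ) - (n:ℝ) * (2*R) = y - ξ - 2*(n:ℝ)*R by ring] at h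
    exact h
  have hb2 : ∀ n : ℤ, ∀ ξ ∈ Ioc (0:ℝ) R, Phi (y + ξ - 2 * n * R) s
      ≤ Kc s (2*R) * uZ ((2*R)^2/(4*s)) n := by
    intro n ξ hξ
    have h := phi_le_master hs hw (xbound2 hR hy0 hyR hξ) n
    rw [show (y + ξ) - (n:ℝ) * (2*R) = y + ξ - 2*(n:ℝ)*R by ring] at h
    exact h
  have hIntA : IntegrableOn (fun ξ => ∑' n : ℤ, Phi (y - ξ - 2 * n * R) s) (Ioc 0 R) :=
    aux_integrableOn hmeas1 (fun n ξ => phi_nonneg _ _) hu hb1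
  have hIntB : IntegrableOn (fun ξ => ∑' n : ℤ, Phi (y + ξ - 2 * n * R) s) (Ioc 0 R) :=
    aux_integrableOn hmeas2 (fun n ξ => phi_nonneg _ _) hu hb2
  -- family sums
  have hfam1 := family_key (integrable_phi hs) (fun x => phi_nonneg x s) hR0
    (fun n : ℤ => y + n * (-(2*R)))
    (spacing hR0 y (-(2*R)) (by rw [abs_neg, abs_of_pos hw]))
  have hfam2 := family_key (integrable_phi hs) (fun x => phi_nonneg x s) hR0
    (fun n : ℤ => -y + n * (2*R))
    (spacing hR0 (-y) (2*R) (abs_of_pos hw))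
  have hc1 : (fun n : ℤ => ∫ ξ in Ioc (0:ℝ) R, Phi ((y + n * (-(2*R))) - ξ) s)
      = fun n : ℤ => ∫ ξ in Ioc (0:ℝ) R, Phi (y - ξ - 2 * n * R) s := by
    funext n
    refine setIntegral_congr_fun measurableSet_Ioc fun ξ _ => ?_
    congr 1; ring
  have hc2 : (fun n : ℤ => ∫ ξ in Ioc (0:ℝ) R, Phi ((-y + n * (2*R)) - ξ) s)
      = fun n : ℤ => ∫ ξ in Ioc (0:ℝ) R, Phi (y + ξ - 2 * n * R) s := by
    funext n
    refine setIntegral_congr_fun measurableSet_Ioc fun ξ _ => ?_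
    rw [show (-y + (n:ℝ) * (2*R)) - ξ = -(y + ξ - 2*(n:ℝ)*R) by ring, phi_neg]
  rw [hc1] at hfam1
  rw [hc2] at hfam2
  obtain ⟨hsum1, hle1⟩ := hfam1
  obtain ⟨hsum2, hle2⟩ := hfam2
  -- interchange sum and integral
  have hIA : ∫ ξ in Ioc (0:ℝ) R, ∑' n : ℤ, Phi (y - ξ - 2 * n * R) s ≤ 1 := by
    rw [← integral_tsum_of_summable_integral_norm
      (F := fun (n : ℤ) (ξ : ℝ) => Phi (y - ξ - 2 * n * R) s)
      (fun n => (cont_sub y (2 * (n:ℝ) * R) s).integrableOn_Ioc)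
      (hsum1.congr fun n => ?_)]
    · calc ∑' n : ℤ, ∫ ξ in Ioc (0:ℝ) R, Phi (y - ξ - 2 * n * R) s ≤ ∫ x, Phi x s := hle1
        _ = 1 := integral_phi hs
    · refine (setIntegral_congr_fun measurableSet_Ioc fun ξ _ => ?_)
      exact (Real.norm_of_nonneg (phi_nonneg _ _)).symm
  have hIB : ∫ ξ in Ioc (0:ℝ) R, ∑' n : ℤ, Phi (y + ξ - 2 * n * R) s ≤ 1 := by
    rw [← integral_tsum_of_summable_integral_norm
      (F := fun (n : ℤ) (ξ : ℝ) => Phi (y + ξ - 2 * n * R) s)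
      (fun n => (cont_add y (2 * (n:ℝ) * R) s).integrableOn_Ioc)
      (hsum2.congr fun n => ?_)]
    · calc ∑' n : ℤ, ∫ ξ in Ioc (0:ℝ) R, Phi (y + ξ - 2 * n * R) s ≤ ∫ x, Phi x s := hle2
        _ = 1 := integral_phi hs
    · refine (setIntegral_congr_fun measurableSet_Ioc fun ξ _ => ?_)
      exact (Real.norm_of_nonneg (phi_nonneg _ _)).symm
  calc ∫ ξ in Ioc (0:ℝ) R, |GtildeR R y ξ s|
      ≤ ∫ ξ in Ioc (0:ℝ) R, ((∑' n : ℤ, Phi (y - ξ - 2 * n * R) s)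
          + ∑' n : ℤ, Phi (y + ξ - 2 * n * R) s) := by
        refine integral_mono_of_nonneg ?_ (hIntA.add hIntB) ?_
        · filter_upwards with ξ using abs_nonneg _
        · exact (ae_restrict_iff' measurableSet_Ioc).mpr (Filter.Eventually.of_forall hGle)
    _ = (∫ ξ in Ioc (0:ℝ) R, ∑' n : ℤ, Phi (y - ξ - 2 * n * R) s)
          + ∫ ξ in Ioc (0:ℝ) R, ∑' n : ℤ, Phi (y + ξ - 2 * n * R) s :=
        integral_add hIntA hIntB
    _ ≤ 1 + 1 := add_le_add hIA hIB
    _ = 2 := by norm_num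

end MainParts
section Part2

variable {R y s : ℝ}

lemma abs_term (s z : ℝ) (hs : 0 < s) : |(-(z / (2*s)) * Phi z s)| = psi s z := by
  rw [abs_mul, abs_neg, abs_div, abs_of_pos (by positivity : (0:ℝ) < 2*s),
    abs_of_nonneg (phi_nonneg z s), psi]

lemma cont_sub_psi (c d s : ℝ) : Continuous fun ξ : ℝ => psi s (c - ξ - d) := by
  have h : Continuous fun ξ : ℝ => c - ξ - d :=
    (continuous_const.sub continuous_id).sub continuous_const
  exact (continuous_psi s).comp h

lemma cont_add_psi (c d s : ℝ) : Continuous fun ξ : ℝ => psi s (c + ξ - d) := by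
  have h : Continuous fun ξ : ℝ => c + ξ - d :=
    (continuous_const.add continuous_id).sub continuous_const
  exact (continuous_psi s).comp h

lemma sum_psi1 (hs : 0 < s) (hR : 2 ≤ R) (hy0 : 0 ≤ y) (hyR : y ≤ R)
    {ξ : ℝ} (hξ : ξ ∈ Ioc (0:ℝ) R) :
    Summable (fun n : ℤ => psi s (y - ξ - 2 * n * R)) := by
  refine (summable_psi_family hs (by linarith : (0:ℝ) < 2 * R)
    (xbound1 hR hy0 hyR hξ)).congr fun n => ?_
  congr 1; ring

lemma sum_psi2 (hs : 0 < s) (hR : 2 ≤ R) (hy0 : 0 ≤ y) (hyR : y ≤ R)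
    {ξ : ℝ} (hξ : ξ ∈ Ioc (0:ℝ) R) :
    Summable (fun n : ℤ => psi s (y + ξ - 2 * n * R)) := by
  refine (summable_psi_family hs (by linarith : (0:ℝ) < 2 * R)
    (xbound2 hR hy0 hyR hξ)).congr fun n => ?_
  congr 1; ring

lemma part2 (hR : 2 ≤ R) (hy0 : 0 ≤ y) (hyR : y ≤ R) (hs : 0 < s) :
    (∫ ξ in Set.Ioc (0:ℝ) R, |deriv (fun y' => GtildeR R y' ξ s) y|)
      ≤ 2 * Real.sqrt 2 / Real.sqrt s := by
  have hR0 : (0:ℝ) < R := by linarith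
  have hw : (0:ℝ) < 2 * R := by linarith
  have hβ : (0:ℝ) < (2*R) ^ 2 / (4 * s) := by positivity
  have hu : Summable (fun n : ℤ => Kc s (2*R) * uZ ((2*R)^2/(4*s)) n) :=
    (summable_uZ hβ).mul_left _
  -- derivative identity
  have hderiv : ∀ ξ ∈ Ioc (0:ℝ) R, deriv (fun y' => GtildeR R y' ξ s) y
      = ∑' n : ℤ, (-((y - ξ - 2*n*R)/(2*s)) * Phi (y - ξ - 2*n*R) s
          - -((y + ξ - 2*n*R)/(2*s)) * Phi (y + ξ - 2*n*R) s) := by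
    intro ξ hξ
    obtain ⟨hξ0, hξR⟩ := hξ
    have hgd : ∀ (n : ℤ) (y₀ : ℝ),
        HasDerivAt (fun y' => Phi (y' - ξ - 2*n*R) s - Phi (y' + ξ - 2*n*R) s)
        (-((y₀ - ξ - 2*n*R)/(2*s)) * Phi (y₀ - ξ - 2*n*R) s
          - -((y₀ + ξ - 2*n*R)/(2*s)) * Phi (y₀ + ξ - 2*n*R) s) y₀ := by
      intro n y₀
      have ha' := hasDerivAt_term hs (ξ + 2*n*R) y₀
      have hb' := hasDerivAt_term hs (2*n*R - ξ) y₀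
      have e1 : (fun y' : ℝ => Phi (y' - (ξ + 2*(n:ℝ)*R)) s)
          = fun y' => Phi (y' - ξ - 2*(n:ℝ)*R) s := by
        funext u; congr 1; ring
      have e2 : (fun y' : ℝ => Phi (y' - (2*(n:ℝ)*R - ξ)) s)
          = fun y' => Phi (y' + ξ - 2*(n:ℝ)*R) s := by
        funext u; congr 1; ring
      rw [e1, show y₀ - (ξ + 2*(n:ℝ)*R) = y₀ - ξ - 2*(n:ℝ)*R by ring] at ha'
      rw [e2, show y₀ - (2*(n:ℝ)*R - ξ) = y₀ + ξ - 2*(n:ℝ)*R by ring] at hb'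
      exact ha'.sub hb'
    have hmem : y ∈ Ioo (-1 : ℝ) (R + 1) := ⟨by linarith, by linarith⟩
    have hbound : ∀ (n : ℤ), ∀ y' ∈ Ioo (-1:ℝ) (R+1),
        ‖(-((y' - ξ - 2*n*R)/(2*s)) * Phi (y' - ξ - 2*n*R) s
          - -((y' + ξ - 2*n*R)/(2*s)) * Phi (y' + ξ - 2*n*R) s)‖
          ≤ 2 * (Kc s (2*R) * uZ ((2*R)^2/(4*s)) n) := by
      intro n y' hy'
      obtain ⟨hl, hr⟩ := hy'
      have hx1 : |y' - ξ| ≤ 2*(2*R) := abs_le.mpr ⟨by linarith, by linarith⟩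
      have hx2 : |y' + ξ| ≤ 2*(2*R) := abs_le.mpr ⟨by linarith, by linarith⟩
      have t1 := psi_le_master hs hw hx1 n
      have t2 := psi_le_master hs hw hx2 n
      rw [show (y' - ξ) - (n:ℝ)*(2*R) = y' - ξ - 2*(n:ℝ)*R by ring] at t1
      rw [show (y' + ξ) - (n:ℝ)*(2*R) = y' + ξ - 2*(n:ℝ)*R by ring] at t2
      rw [Real.norm_eq_abs]
      refine (abs_sub _ _).trans ?_
      rw [abs_term s _ hs, abs_term s _ hs]
      linarith
    have hg0 : Summable (fun n : ℤ => Phi (y - ξ - 2*n*R) s - Phi (y + ξ - 2*n*R) s) :=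
      (sum_phi1 hs hR hy0 hyR ⟨hξ0, hξR⟩).sub (sum_phi2 hs hR hy0 hyR ⟨hξ0, hξR⟩)
    have hder := hasDerivAt_tsum_of_isPreconnected (hu.mul_left 2) isOpen_Ioo
      isPreconnected_Ioo (fun n y₀ _ => hgd n y₀) hbound hmem hg0 hmem
    have hfun : (fun y' => GtildeR R y' ξ s)
        = fun y' => ∑' n : ℤ, (Phi (y' - ξ - 2*n*R) s - Phi (y' + ξ - 2*n*R) s) := rfl
    rw [hfun]
    exact hder.deriv
  -- pointwise bound
  have hDle : ∀ ξ ∈ Ioc (0:ℝ) R, |deriv (fun y' => GtildeR R y' ξ s) y| ≤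
      (∑' n : ℤ, psi s (y - ξ - 2*n*R)) + ∑' n : ℤ, psi s (y + ξ - 2*n*R) := by
    intro ξ hξ
    rw [hderiv ξ hξ]
    have hS1 : Summable (fun n : ℤ => ‖-((y - ξ - 2*n*R)/(2*s)) * Phi (y - ξ - 2*n*R) s‖) := by
      refine (sum_psi1 hs hR hy0 hyR hξ).congr fun n => ?_
      rw [Real.norm_eq_abs, abs_term s _ hs]
    have hS2 : Summable (fun n : ℤ => ‖-((y + ξ - 2*n*R)/(2*s)) * Phi (y + ξ - 2*n*R) s‖) := by
      refine (sum_psi2 hs hR hy0 hyR hξ).congr fun n => ?_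
      rw [Real.norm_eq_abs, abs_term s _ hs]
    rw [Summable.tsum_sub hS1.of_norm hS2.of_norm]
    refine (abs_sub _ _).trans (add_le_add ?_ ?_)
    · rw [← Real.norm_eq_abs]
      refine (norm_tsum_le_tsum_norm hS1).trans (le_of_eq (tsum_congr fun n => ?_))
      rw [Real.norm_eq_abs, abs_term s _ hs]
    · rw [← Real.norm_eq_abs]
      refine (norm_tsum_le_tsum_norm hS2).trans (le_of_eq (tsum_congr fun n => ?_))
      rw [Real.norm_eq_abs, abs_term s _ hs]
  -- integrability
  have hmeas1 : ∀ n : ℤ, Measurable (fun ξ : ℝ => psi s (y - ξ - 2 * (n:ℝ) * R)) := fun n =>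
    (cont_sub_psi y (2 * (n:ℝ) * R) s).measurable
  have hmeas2 : ∀ n : ℤ, Measurable (fun ξ : ℝ => psi s (y + ξ - 2 * (n:ℝ) * R)) := fun n =>
    (cont_add_psi y (2 * (n:ℝ) * R) s).measurable
  have hb1 : ∀ n : ℤ, ∀ ξ ∈ Ioc (0:ℝ) R, psi s (y - ξ - 2 * n * R)
      ≤ Kc s (2*R) * uZ ((2*R)^2/(4*s)) n := by
    intro n ξ hξ
    have h := psi_le_master hs hw (xbound1 hR hy0 hyR hξ) n
    rw [show (y - ξ) - (n:ℝ) * (2*R) = y - ξ - 2*(n:ℝ)*R by ring] at h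
    exact h
  have hb2 : ∀ n : ℤ, ∀ ξ ∈ Ioc (0:ℝ) R, psi s (y + ξ - 2 * n * R)
      ≤ Kc s (2*R) * uZ ((2*R)^2/(4*s)) n := by
    intro n ξ hξ
    have h := psi_le_master hs hw (xbound2 hR hy0 hyR hξ) n
    rw [show (y + ξ) - (n:ℝ) * (2*R) = y + ξ - 2*(n:ℝ)*R by ring] at h
    exact h
  have hIntA : IntegrableOn (fun ξ => ∑' n : ℤ, psi s (y - ξ - 2 * n * R)) (Ioc 0 R) :=
    aux_integrableOn hmeas1 (fun n ξ => psi_nonneg hs _) hu hb1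
  have hIntB : IntegrableOn (fun ξ => ∑' n : ℤ, psi s (y + ξ - 2 * n * R)) (Ioc 0 R) :=
    aux_integrableOn hmeas2 (fun n ξ => psi_nonneg hs _) hu hb2
  -- family sums
  have hfam1 := family_key (integrable_psi hs) (psi_nonneg hs) hR0
    (fun n : ℤ => y + n * (-(2*R)))
    (spacing hR0 y (-(2*R)) (by rw [abs_neg, abs_of_pos hw]))
  have hfam2 := family_key (integrable_psi hs) (psi_nonneg hs) hR0
    (fun n : ℤ => -y + n * (2*R))
    (spacing hR0 (-y) (2*R) (abs_of_pos hw))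
  have hc1 : (fun n : ℤ => ∫ ξ in Ioc (0:ℝ) R, psi s ((y + n * (-(2*R))) - ξ))
      = fun n : ℤ => ∫ ξ in Ioc (0:ℝ) R, psi s (y - ξ - 2 * n * R) := by
    funext n
    refine setIntegral_congr_fun measurableSet_Ioc fun ξ _ => ?_
    congr 1; ring
  have hc2 : (fun n : ℤ => ∫ ξ in Ioc (0:ℝ) R, psi s ((-y + n * (2*R)) - ξ))
      = fun n : ℤ => ∫ ξ in Ioc (0:ℝ) R, psi s (y + ξ - 2 * n * R) := by
    funext n
    refine setIntegral_congr_fun measurableSet_Ioc fun ξ _ => ?_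
    rw [show (-y + (n:ℝ) * (2*R)) - ξ = -(y + ξ - 2*(n:ℝ)*R) by ring, psi_neg]
  rw [hc1] at hfam1
  rw [hc2] at hfam2
  obtain ⟨hsum1, hle1⟩ := hfam1
  obtain ⟨hsum2, hle2⟩ := hfam2
  -- interchange
  have hIA : ∫ ξ in Ioc (0:ℝ) R, ∑' n : ℤ, psi s (y - ξ - 2 * n * R)
      ≤ 2 / Real.sqrt (4 * π * s) := by
    rw [← integral_tsum_of_summable_integral_norm
      (F := fun (n : ℤ) (ξ : ℝ) => psi s (y - ξ - 2 * n * R))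
      (fun n => (cont_sub_psi y (2 * (n:ℝ) * R) s).integrableOn_Ioc)
      (hsum1.congr fun n => ?_)]
    · calc ∑' n : ℤ, ∫ ξ in Ioc (0:ℝ) R, psi s (y - ξ - 2 * n * R) ≤ ∫ x, psi s x := hle1
        _ = 2 / Real.sqrt (4 * π * s) := integral_psi hs
    · refine (setIntegral_congr_fun measurableSet_Ioc fun ξ _ => ?_)
      exact (Real.norm_of_nonneg (psi_nonneg hs _)).symm
  have hIB : ∫ ξ in Ioc (0:ℝ) R, ∑' n : ℤ, psi s (y + ξ - 2 * n * R)
      ≤ 2 / Real.sqrt (4 * π * s) := by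
    rw [← integral_tsum_of_summable_integral_norm
      (F := fun (n : ℤ) (ξ : ℝ) => psi s (y + ξ - 2 * n * R))
      (fun n => (cont_add_psi y (2 * (n:ℝ) * R) s).integrableOn_Ioc)
      (hsum2.congr fun n => ?_)]
    · calc ∑' n : ℤ, ∫ ξ in Ioc (0:ℝ) R, psi s (y + ξ - 2 * n * R) ≤ ∫ x, psi s x := hle2
        _ = 2 / Real.sqrt (4 * π * s) := integral_psi hs
    · refine (setIntegral_congr_fun measurableSet_Ioc fun ξ _ => ?_)
      exact (Real.norm_of_nonneg (psi_nonneg hs _)).symm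
  calc ∫ ξ in Ioc (0:ℝ) R, |deriv (fun y' => GtildeR R y' ξ s) y|
      ≤ ∫ ξ in Ioc (0:ℝ) R, ((∑' n : ℤ, psi s (y - ξ - 2 * n * R))
          + ∑' n : ℤ, psi s (y + ξ - 2 * n * R)) := by
        refine integral_mono_of_nonneg ?_ (hIntA.add hIntB) ?_
        · filter_upwards with ξ using abs_nonneg _
        · exact (ae_restrict_iff' measurableSet_Ioc).mpr (Filter.Eventually.of_forall hDle)
    _ = (∫ ξ in Ioc (0:ℝ) R, ∑' n : ℤ, psi s (y - ξ - 2 * n * R))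
          + ∫ ξ in Ioc (0:ℝ) R, ∑' n : ℤ, psi s (y + ξ - 2 * n * R) :=
        integral_add hIntA hIntB
    _ ≤ 2 / Real.sqrt (4 * π * s) + 2 / Real.sqrt (4 * π * s) := add_le_add hIA hIB
    _ = 2 * (2 / Real.sqrt (4 * π * s)) := by ring
    _ ≤ 2 * (Real.sqrt 2 / Real.sqrt s) := by
        have := two_div_sqrt_le hs
        linarith
    _ = 2 * Real.sqrt 2 / Real.sqrt s := by ring

end Part2

theorem stmt16 (R y a t : ℝ) (hR : 2 ≤ R) (hy : y ∈ Set.Icc (0 : ℝ) R)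
    (ha : 0 < a) (ht : 0 < t) :
    (∫ ξ in Set.Ioc (0 : ℝ) R, |GtildeR R y ξ (a * t)|) ≤ 2 ∧
    (∫ ξ in Set.Ioc (0 : ℝ) R, |deriv (fun y' => GtildeR R y' ξ (a * t)) y|)
      ≤ 2 * Real.sqrt 2 / Real.sqrt (a * t) := by
  obtain ⟨hy0, hyR⟩ := hy
  have hs : 0 < a * t := mul_pos ha ht
  exact ⟨part1 hR hy0 hyR hs, part2 hR hy0 hyR hs⟩
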